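/- Freshness is preserved under nominal equality: if ∇ ⊢ t₁ ≈ t₂ and ∇ ⊢ a # t₁, then ∇ ⊢ a # t₂. -/
import Mathlib


abbrev Atom := ℕ
abbrev Var := ℕ
abbrev Perm := List (Atom × Atom)

def swap (p : Atom × Atom) (a : Atom) : Atom :=
  if a = p.1 then p.2 else if a = p.2 then p.1 else a

def permAtom : Perm → Atom → Atom
  | [], a => a
  | p :: π, a => swap p (permAtom π a)

def ds (π π' : Perm) : Set Atom := {a | permAtom π a ≠ permAtom π' a}

inductive Trm : Type
  | unit : Trm
  | pair : Trm → Trm → Trm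
  | fn : ℕ → Trm → Trm
  | atom : Atom → Trm
  | abs : Atom → Trm → Trm
  | susp : Perm → Var → Trm

def permTrm (π : Perm) : Trm → Trm
  | .unit => .unit
  | .pair t₁ t₂ => .pair (permTrm π t₁) (permTrm π t₂)
  | .fn f t => .fn f (permTrm π t)
  | .atom a => .atom (permAtom π a)
  | .abs a t => .abs (permAtom π a) (permTrm π t)
  | .susp π' X => .susp (π ++ π') X

abbrev Env := Set (Atom × Var)

inductive fresh (Γ : Env) (a : Atom) : Trm → Prop
  | unit : fresh Γ a .unit
  | pair {t₁ t₂} : fresh Γ a t₁ → fresh Γ a t₂ → fresh Γ a (.pair t₁ t₂)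
  | fn {f t} : fresh Γ a t → fresh Γ a (.fn f t)
  | abs₁ {t} : fresh Γ a (.abs a t)
  | abs₂ {b t} : a ≠ b → fresh Γ a t → fresh Γ a (.abs b t)
  | atom {b} : a ≠ b → fresh Γ a (.atom b)
  | susp {π X} : (permAtom π.reverse a, X) ∈ Γ → fresh Γ a (.susp π X)

inductive equ (Γ : Env) : Trm → Trm → Prop
  | unit : equ Γ .unit .unit
  | pair {t₁ t₂ s₁ s₂} : equ Γ t₁ t₂ → equ Γ s₁ s₂ → equ Γ (.pair t₁ s₁) (.pair t₂ s₂)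
  | fn {f t₁ t₂} : equ Γ t₁ t₂ → equ Γ (.fn f t₁) (.fn f t₂)
  | abs₁ {a t₁ t₂} : equ Γ t₁ t₂ → equ Γ (.abs a t₁) (.abs a t₂)
  | abs₂ {a b t₁ t₂} : a ≠ b → fresh Γ a t₂ → equ Γ t₁ (permTrm [(a, b)] t₂) →
      equ Γ (.abs a t₁) (.abs b t₂)
  | atom {a} : equ Γ (.atom a) (.atom a)
  | susp {π π' X} : (∀ c ∈ ds π π', (c, X) ∈ Γ) → equ Γ (.susp π X) (.susp π' X)

inductive weak : Trm → Trm → Prop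
  | unit : weak .unit .unit
  | atom {a} : weak (.atom a) (.atom a)
  | fn {f t t'} : weak t t' → weak (.fn f t) (.fn f t')
  | pair {t₁ t₂ s₁ s₂} : weak t₁ s₁ → weak t₂ s₂ → weak (.pair t₁ t₂) (.pair s₁ s₂)
  | abs {a t t'} : weak t t' → weak (.abs a t) (.abs a t')
  | susp {π π' X} : ds π π' = ∅ → weak (.susp π X) (.susp π' X)

def subst (σ : Var → Option Trm) : Trm → Trm
  | .unit => .unit
  | .pair t₁ t₂ => .pair (subst σ t₁) (subst σ t₂)
  | .fn f t => .fn f (subst σ t)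
  | .atom a => .atom a
  | .abs a t => .abs a (subst σ t)
  | .susp π X =>
      match σ X with
      | some t => permTrm π t
      | none => .susp π X

lemma swap_swap (p : Atom × Atom) (a : Atom) : swap p (swap p a) = a := by
  obtain ⟨b, c⟩ := p
  simp only [swap]
  rcases eq_or_ne a b with rfl | h1 <;> rcases eq_or_ne a c with rfl | h2 <;>
    simp_all

lemma permAtom_append (π π' : Perm) (a : Atom) :
    permAtom (π ++ π') a = permAtom π (permAtom π' a) := by
  induction π with
  | nil => rfl
  | cons p π ih => simp [permAtom, ih]

lemma permAtom_rev_right (π : Perm) (a : Atom) :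
    permAtom π (permAtom π.reverse a) = a := by
  induction π generalizing a with
  | nil => rfl
  | cons p π ih =>
    have : permAtom (p :: π).reverse a = permAtom π.reverse (swap p a) := by
      simp [List.reverse_cons, permAtom_append, permAtom]
    rw [this]
    simp [permAtom, ih, swap_swap]

lemma permAtom_rev_left (π : Perm) (a : Atom) :
    permAtom π.reverse (permAtom π a) = a := by
  have := permAtom_rev_right π.reverse a
  rwa [List.reverse_reverse] at this

lemma fresh_permTrm (Γ : Env) (π : Perm) (a : Atom) (t : Trm) :
    fresh Γ a (permTrm π t) ↔ fresh Γ (permAtom π.reverse a) t := by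
  induction t with
  | unit => exact ⟨fun _ => .unit, fun _ => .unit⟩
  | pair t₁ t₂ ih₁ ih₂ =>
    constructor
    · intro h; cases h with
      | pair h1 h2 => exact .pair (ih₁.mp h1) (ih₂.mp h2)
    · intro h; cases h with
      | pair h1 h2 => exact .pair (ih₁.mpr h1) (ih₂.mpr h2)
  | fn f t ih =>
    constructor
    · intro h; cases h with | fn h => exact .fn (ih.mp h)
    · intro h; cases h with | fn h => exact .fn (ih.mpr h)
  | atom b =>
    constructor
    · intro h; cases h with
      | atom hne =>
        exact .atom (fun e => hne (by rw [← e, permAtom_rev_right]))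
    · intro h; cases h with
      | atom hne =>
        exact .atom (fun e => hne (by rw [e, permAtom_rev_left]))
  | abs b t ih =>
    show fresh Γ a (.abs (permAtom π b) (permTrm π t)) ↔ _
    by_cases hab : a = permAtom π b
    · have hrb : permAtom π.reverse a = b := by rw [hab, permAtom_rev_left]
      rw [hrb]
      exact ⟨fun _ => .abs₁, fun _ => hab ▸ .abs₁⟩
    · have hrb : permAtom π.reverse a ≠ b := by
        intro e
        exact hab (by rw [← e, permAtom_rev_right])
      constructor
      · intro h
        cases h with
        | abs₁ => exact absurd rfl hab
        | abs₂ hne hf => exact .abs₂ hrb (ih.mp hf)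
      · intro h
        cases h with
        | abs₁ => exact absurd rfl hrb
        | abs₂ hne hf => exact .abs₂ hab (ih.mpr hf)
  | susp π' X =>
    constructor
    · intro h; cases h with
      | susp hmem =>
        refine .susp ?_
        rwa [List.reverse_append, permAtom_append] at hmem
    · intro h; cases h with
      | susp hmem =>
        refine .susp ?_
        rwa [List.reverse_append, permAtom_append]

theorem fresh_equ (Γ : Env) (a : Atom) (t₁ t₂ : Trm)
    (h₁ : equ Γ t₁ t₂) (h₂ : fresh Γ a t₁) : fresh Γ a t₂ := by
  revert h₂
  induction h₁ with
  | unit => exact fun h => h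
  | pair e₁ e₂ ih₁ ih₂ =>
    intro h; cases h with
    | pair h1 h2 => exact .pair (ih₁ h1) (ih₂ h2)
  | fn e ih =>
    intro h; cases h with
    | fn h => exact .fn (ih h)
  | abs₁ e ih =>
    intro h; cases h with
    | abs₁ => exact .abs₁
    | abs₂ hne hf => exact .abs₂ hne (ih hf)
  | @abs₂ a' b t₁' t₂' hne hf e ih =>
    intro h; cases h with
    | abs₁ => exact .abs₂ hne hf
    | abs₂ hne' hf' =>
      have hp : fresh Γ a (permTrm [(a', b)] t₂') := ih hf'
      by_cases hab : a = b
      · subst hab; exact .abs₁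
      · have := (fresh_permTrm Γ [(a', b)] a t₂').mp hp
        have hs : permAtom ([(a', b)] : Perm).reverse a = a := by
          simp [permAtom, swap, hne', hab]
        rw [hs] at this
        exact .abs₂ hab this
  | atom => exact fun h => h
  | @susp π π' X hds =>
    intro h; cases h with
    | susp hmem =>
      refine .susp ?_
      by_cases hc : permAtom π'.reverse a = permAtom π.reverse a
      · rwa [hc]
      · apply hds
        intro he
        apply hc
        have h1 : permAtom π' (permAtom π'.reverse a) = a := permAtom_rev_right _ _
        rw [h1] at he
        conv_rhs => rw [← he]
        rw [permAtom_rev_left]
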